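/- The natural 7-dimensional complex representation of the group ⟨P_α, P_β, N₁⟩ ≤ GL₇(ℚ) is irreducible: the only ℂ-linear subspaces of ℂ⁷ that are invariant under the three matrices P_α, P_β and N₁ (viewed as complex matrices) are {0} and ℂ⁷. -/

import Mathlib

open Matrix Equiv

/-- `PSL₂(7)`: the quotient of `SL(2, ℤ/7ℤ)` by its center. -/
abbrev PSL₂7 : Type :=
  Matrix.SpecialLinearGroup (Fin 2) (ZMod 7) ⧸
    Subgroup.center (Matrix.SpecialLinearGroup (Fin 2) (ZMod 7))

/-- The permutation matrix of `σ` (sending the basis vector `eⱼ` to `e_{σ j}`),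
as an element of `GL₇(ℚ)`.  (We index the basis `e₁, …, e₇` of the paper by `Fin 7`,
so `e_{i+1}` corresponds to index `i`.) -/
def permGL (σ : Equiv.Perm (Fin 7)) : GL (Fin 7) ℚ :=
  ⟨(σ⁻¹).permMatrix ℚ, σ.permMatrix ℚ,
    by rw [← PEquiv.toMatrix_trans, ← Equiv.toPEquiv_trans]
       simp [Equiv.Perm.inv_def, Equiv.toPEquiv_refl],
    by rw [← PEquiv.toMatrix_trans, ← Equiv.toPEquiv_trans]
       simp [Equiv.Perm.inv_def, Equiv.toPEquiv_refl]⟩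

theorem diag_mul_self (v : Fin 7 → ℚ) (h : ∀ i, v i * v i = 1) :
    Matrix.diagonal v * Matrix.diagonal v = 1 := by
  rw [Matrix.diagonal_mul_diagonal]
  have hv : (fun i => v i * v i) = fun _ => (1 : ℚ) := funext h
  rw [hv]
  exact Matrix.diagonal_one

/-- A diagonal `±1` matrix as an element of `GL₇(ℚ)`. -/
def diagGL (v : Fin 7 → ℚ) (h : ∀ i, v i * v i = 1) : GL (Fin 7) ℚ :=
  ⟨Matrix.diagonal v, Matrix.diagonal v, diag_mul_self v h, diag_mul_self v h⟩

/-- `α`, the 7-cycle `(1 2 4 3 6 5 7)` of the paper, written 0-indexed on `Fin 7`. -/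
def α : Equiv.Perm (Fin 7) := c[0, 1, 3, 2, 5, 4, 6]

/-- `β = (2 4 6)(3 7 5)` of the paper, written 0-indexed on `Fin 7`. -/
def β : Equiv.Perm (Fin 7) := c[1, 3, 5] * c[2, 6, 4]

def N₁ : GL (Fin 7) ℚ :=
  diagGL ![1, 1, 1, -1, -1, -1, -1] (by intro i; fin_cases i <;> norm_num [Matrix.cons_val_succ])

/-- A rational matrix viewed as a complex matrix. -/
noncomputable def toC (A : Matrix (Fin 7) (Fin 7) ℚ) : Matrix (Fin 7) (Fin 7) ℂ :=
  A.map (fun x => (x : ℂ))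

namespace Stmt4Aux

/-- Boolean sign pattern of the `k`-th conjugate `αᵏ N₁ α⁻ᵏ`. -/
def pat (k i : Fin 7) : Bool := ((α ^ (k : ℕ))⁻¹ i).val ≤ 2

/-- The sign, as a complex number. -/
noncomputable def sgn (k i : Fin 7) : ℂ := if pat k i then 1 else -1

lemma sgn_sq (k i : Fin 7) : sgn k i * sgn k i = 1 := by
  unfold sgn; split <;> norm_num

lemma sgn_mul_neg {k i j : Fin 7} (h : pat k i ≠ pat k j) : sgn k i * sgn k j = -1 := by
  unfold sgn
  rcases Bool.eq_false_or_eq_true (pat k i) with h1 | h1 <;>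
    rcases Bool.eq_false_or_eq_true (pat k j) with h2 | h2 <;>
      simp [h1, h2] at h ⊢ <;> norm_num

lemma permC (σ : Equiv.Perm (Fin 7)) (w : Fin 7 → ℂ) :
    (toC (permGL σ).val).mulVec w = fun i => w (σ⁻¹ i) := by
  funext i
  simp [toC, permGL, mulVec, dotProduct, PEquiv.toMatrix, Equiv.toPEquiv,
    apply_ite (fun q : ℚ => (q : ℂ))]

lemma diagC (w : Fin 7 → ℂ) :
    (toC N₁.val).mulVec w = fun i => sgn 0 i * w i := by
  funext i
  have : ((![1, 1, 1, -1, -1, -1, -1] : Fin 7 → ℚ) i : ℂ) = sgn 0 i := by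
    fin_cases i <;> norm_num [sgn, pat, pow_zero] <;> rfl
  calc (toC N₁.val).mulVec w i
      = ((![1, 1, 1, -1, -1, -1, -1] : Fin 7 → ℚ) i : ℂ) * w i := by
        simp [toC, N₁, diagGL, mulVec, dotProduct, Matrix.diagonal,
          apply_ite (fun q : ℚ => (q : ℂ))]
    _ = sgn 0 i * w i := by rw [this]

set_option maxRecDepth 10000 in
lemma alpha_pow_seven : α ^ 7 = 1 := by decide

lemma sep : ∀ i j : Fin 7, i ≠ j → ∃ k : Fin 7, pat k i ≠ pat k j := by decide

lemma trans : ∀ i j : Fin 7, ∃ k : Fin 7, (α ^ (k : ℕ)) i = j := by decide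

end Stmt4Aux

open Stmt4Aux

theorem stmt4 :
    ∀ W : Submodule ℂ (Fin 7 → ℂ),
      (∀ w ∈ W, (toC (permGL α).val).mulVec w ∈ W) →
      (∀ w ∈ W, (toC (permGL β).val).mulVec w ∈ W) →
      (∀ w ∈ W, (toC N₁.val).mulVec w ∈ W) →
      W = ⊥ ∨ W = ⊤ := by
  intro W hA _hB hN
  by_cases hbot : W = ⊥
  · exact Or.inl hbot
  right
  -- closure under α-shift
  have ha : ∀ w ∈ W, (fun i => w (α⁻¹ i)) ∈ W := by
    intro w hw
    have := hA w hw
    rwa [permC] at this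
  -- closure under powers of the α-shift
  have hak : ∀ (m : ℕ), ∀ w ∈ W, (fun i => w ((α ^ m)⁻¹ i)) ∈ W := by
    intro m
    induction m with
    | zero => intro w hw; simpa using hw
    | succ k ih =>
      intro w hw
      have h1 := ha w hw
      have h2 := ih _ h1
      have : (fun i => (fun i => w (α⁻¹ i)) ((α ^ k)⁻¹ i)) =
          (fun i => w ((α ^ (k + 1))⁻¹ i)) := by
        funext i
        congr 1
        rw [pow_succ]
        simp [Equiv.Perm.mul_apply]
      rwa [this] at h2
  -- closure under the diagonal conjugates
  have hd : ∀ (k : Fin 7), ∀ w ∈ W, (fun i => sgn k i * w i) ∈ W := by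
    intro k w hw
    have h1 := hak (7 - (k : ℕ)) w hw
    have h2 := hN _ h1
    rw [diagC] at h2
    have h3 := hak (k : ℕ) _ h2
    have : (fun i => (fun i => sgn 0 i * (fun i => w ((α ^ (7 - (k : ℕ)))⁻¹ i)) i)
        ((α ^ (k : ℕ))⁻¹ i)) = (fun i => sgn k i * w i) := by
      funext i
      simp only []
      have hcomp : (α ^ (7 - (k : ℕ)))⁻¹ ((α ^ (k : ℕ))⁻¹ i) = i := by
        have : (α ^ (k : ℕ)) * (α ^ (7 - (k : ℕ))) = 1 := by
          rw [← pow_add]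
          have : (k : ℕ) + (7 - (k : ℕ)) = 7 := by omega
          rw [this, alpha_pow_seven]
        have h4 : (α ^ (7 - (k : ℕ)))⁻¹ * (α ^ (k : ℕ))⁻¹ = 1 := by
          rw [← _root_.mul_inv_rev, this, inv_one]
        calc (α ^ (7 - (k : ℕ)))⁻¹ ((α ^ (k : ℕ))⁻¹ i)
            = ((α ^ (7 - (k : ℕ)))⁻¹ * (α ^ (k : ℕ))⁻¹) i := rfl
          _ = i := by rw [h4]; rfl
      have hsgn : sgn 0 ((α ^ (k : ℕ))⁻¹ i) = sgn k i := by
        unfold sgn pat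
        simp
      rw [hcomp, hsgn]
    rwa [this] at h3
  -- pick a nonzero vector
  obtain ⟨w, hwW, hw0⟩ := Submodule.exists_mem_ne_zero_of_ne_bot hbot
  obtain ⟨i, hwi⟩ : ∃ i, w i ≠ 0 := by
    by_contra h
    push_neg at h
    exact hw0 (funext h)
  -- kill all other coordinates
  have key : ∀ S : Finset (Fin 7), ∃ v ∈ W, v i ≠ 0 ∧ ∀ j ∈ S, j ≠ i → v j = 0 := by
    intro S
    induction S using Finset.induction with
    | empty => exact ⟨w, hwW, hwi, by simp⟩
    | @insert j S hj ih =>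
      obtain ⟨v, hvW, hvi, hvS⟩ := ih
      by_cases hji : j = i
      · refine ⟨v, hvW, hvi, ?_⟩
        intro m hm hmi
        rcases Finset.mem_insert.mp hm with rfl | hm
        · exact absurd hji hmi
        · exact hvS m hm hmi
      · obtain ⟨k, hk⟩ := sep j i hji
        refine ⟨v + (sgn k i) • (fun l => sgn k l * v l), ?_, ?_, ?_⟩
        · exact W.add_mem hvW (W.smul_mem _ (hd k v hvW))
        · simp only [Pi.add_apply, Pi.smul_apply, smul_eq_mul]
          have : v i + sgn k i * (sgn k i * v i) = 2 * v i := by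
            rw [← mul_assoc, sgn_sq]; ring
          rw [this]
          exact mul_ne_zero two_ne_zero hvi
        · intro m hm hmi
          simp only [Pi.add_apply, Pi.smul_apply, smul_eq_mul]
          rcases Finset.mem_insert.mp hm with rfl | hm
          · have : sgn k i * sgn k m = -1 := sgn_mul_neg (Ne.symm hk)
            calc v m + sgn k i * (sgn k m * v m) = v m + (sgn k i * sgn k m) * v m := by ring
              _ = 0 := by rw [this]; ring
          · rw [hvS m hm hmi]; ring
  obtain ⟨v, hvW, hvi, hv⟩ := key Finset.univ
  -- the standard basis vector at i is in W
  have he : ∀ j : Fin 7, (fun l => if l = j then (1 : ℂ) else 0) ∈ W := by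
    have hei : (fun l => if l = i then (1 : ℂ) else 0) ∈ W := by
      have : (fun l => if l = i then (1 : ℂ) else 0) = (v i)⁻¹ • v := by
        funext l
        by_cases hl : l = i
        · subst hl; simp [inv_mul_cancel₀ hvi]
        · simp [hl, hv l (Finset.mem_univ l) hl]
      rw [this]
      exact W.smul_mem _ hvW
    intro j
    obtain ⟨k, hk⟩ := trans i j
    have h1 := hak (k : ℕ) _ hei
    have : (fun l => (fun m => if m = i then (1 : ℂ) else 0) ((α ^ (k : ℕ))⁻¹ l)) =
        (fun l => if l = j then (1 : ℂ) else 0) := by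
      funext l
      simp only []
      have hiff : (α ^ (k : ℕ))⁻¹ l = i ↔ l = j := by
        rw [Equiv.Perm.inv_eq_iff_eq, hk, eq_comm]
      simp only [hiff]
    rwa [this] at h1
  -- conclude
  rw [Submodule.eq_top_iff']
  intro x
  have hx : x = ∑ j : Fin 7, x j • (fun l => if l = j then (1 : ℂ) else 0) := by
    funext l
    simp [Finset.sum_ite_eq', mul_comm]
  rw [hx]
  exact W.sum_mem fun j _ => W.smul_mem _ (he j)
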